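/- arXiv:2403.01604 — 4 statements merged into one kernel-verified Lean document; each statement's English description precedes it below -/
import Mathlib

section
/- For a subset A of a topological space X, A is e*-open if and only if the e*-closure of A is e*-regular (i.e., both e*-open and e*-closed). -/
open Set Topology

variable {X : Type*} [TopologicalSpace X]

/-- δ-closure of A. -/
def deltaCl (A : Set X) : Set X :=
  {x | ∀ U : Set X, IsOpen U → x ∈ U → (interior (closure U) ∩ A).Nonempty}

/-- A is e*-open if A ⊆ cl(int(δ-cl A)). -/
def EStarOpen (A : Set X) : Prop := A ⊆ closure (interior (deltaCl A))

/-- A is e*-closed if its complement is e*-open. -/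
def EStarClosed (A : Set X) : Prop := EStarOpen Aᶜ

/-- e*-closure: intersection of all e*-closed supersets. -/
def eStarCl (A : Set X) : Set X := ⋂₀ {F | EStarClosed F ∧ A ⊆ F}

/-- e*-interior: union of all e*-open subsets. -/
def eStarInt (A : Set X) : Set X := ⋃₀ {U | EStarOpen U ∧ U ⊆ A}

/-- e*-regular: both e*-open and e*-closed. -/
def EStarRegular (A : Set X) : Prop := EStarOpen A ∧ EStarClosed A

/-- e*-θ-closure. -/
def eStarClTheta (A : Set X) : Set X :=
  {x | ∀ U : Set X, EStarOpen U → x ∈ U → (eStarCl U ∩ A).Nonempty}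

/-- e*-θ-closed. -/
def EStarThetaClosed (A : Set X) : Prop := A = eStarClTheta A

/-- e*-θ-open. -/
def EStarThetaOpen (A : Set X) : Prop := EStarThetaClosed Aᶜ

/-- quasi e*-θ-closed. -/
def QEStarThetaClosed (A : Set X) : Prop :=
  ∀ U : Set X, EStarThetaOpen U → A ⊆ U → eStarClTheta A ⊆ U

/-- e*-θ-kernel. -/
def eStarKerTheta (A : Set X) : Set X := ⋂₀ {U | EStarThetaOpen U ∧ A ⊆ U}

lemma subset_deltaCl (A : Set X) : A ⊆ deltaCl A := by
  intro x hx U hU hxU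
  exact ⟨x, interior_mono subset_closure (hU.subset_interior_iff.mpr subset_rfl hxU), hx⟩

lemma deltaCl_mono {A B : Set X} (h : A ⊆ B) : deltaCl A ⊆ deltaCl B := by
  intro x hx U hU hxU
  obtain ⟨y, hy1, hy2⟩ := hx U hU hxU
  exact ⟨y, hy1, h hy2⟩

lemma deltaCl_isClosed (A : Set X) : IsClosed (deltaCl A) := by
  rw [← isOpen_compl_iff]
  rw [isOpen_iff_forall_mem_open]
  intro x hx
  simp only [mem_compl_iff, deltaCl, mem_setOf_eq, not_forall] at hx
  obtain ⟨U, hU, hxU, hne⟩ := hx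
  refine ⟨U, ?_, hU, hxU⟩
  intro y hyU hy
  exact hne (hy U hU hyU)

lemma deltaCl_idem (A : Set X) : deltaCl (deltaCl A : Set X) ⊆ deltaCl A := by
  intro x hx U hU hxU
  obtain ⟨y, hy1, hy2⟩ := hx U hU hxU
  obtain ⟨z, hz1, hz2⟩ := hy2 (interior (closure U)) isOpen_interior hy1
  refine ⟨z, ?_, hz2⟩
  have : closure (interior (closure U)) ⊆ closure U :=
    closure_minimal interior_subset isClosed_closure
  exact interior_mono this hz1

lemma IsOpen.eStarOpen {U : Set X} (hU : IsOpen U) : EStarOpen U := by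
  have h1 : U ⊆ interior (deltaCl U) :=
    interior_maximal (subset_deltaCl U) hU
  exact h1.trans subset_closure

lemma IsClosed.eStarClosed {F : Set X} (hF : IsClosed F) : EStarClosed F :=
  hF.isOpen_compl.eStarOpen

lemma subset_eStarCl (A : Set X) : A ⊆ eStarCl A := by
  intro x hx F hF
  exact hF.2 hx

lemma eStarCl_min {A F : Set X} (hF : EStarClosed F) (h : A ⊆ F) : eStarCl A ⊆ F :=
  sInter_subset_of_mem ⟨hF, h⟩

lemma eStarClosed_eStarCl (A : Set X) : EStarClosed (eStarCl A) := by
  unfold EStarClosed EStarOpen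
  intro x hx
  simp only [eStarCl, mem_compl_iff, mem_sInter, not_forall] at hx
  obtain ⟨F, ⟨hF, hAF⟩, hxF⟩ := hx
  have h1 : Fᶜ ⊆ (eStarCl A)ᶜ := compl_subset_compl.mpr (eStarCl_min hF hAF)
  have := hF hxF
  exact closure_mono (interior_mono (deltaCl_mono h1)) this

lemma eStarCl_subset_deltaCl (A : Set X) : eStarCl A ⊆ deltaCl A :=
  eStarCl_min (deltaCl_isClosed A).eStarClosed (subset_deltaCl A)

lemma deltaCl_eStarCl (A : Set X) : deltaCl (eStarCl A) = deltaCl A := by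
  apply Subset.antisymm
  · exact (deltaCl_mono (eStarCl_subset_deltaCl A)).trans (deltaCl_idem A)
  · exact deltaCl_mono (subset_eStarCl A)

theorem stmt0 (A : Set X) : EStarOpen A ↔ EStarRegular (eStarCl A) := by
  constructor
  · intro h
    refine ⟨?_, eStarClosed_eStarCl A⟩
    unfold EStarOpen
    rw [deltaCl_eStarCl]
    exact eStarCl_min isClosed_closure.eStarClosed h
  · intro ⟨h, _⟩
    unfold EStarOpen at h ⊢
    rw [deltaCl_eStarCl] at h
    exact (subset_eStarCl A).trans h
end

section
/- For a subset A of a topological space X, A is e*-closed if and only if the e*-interior of A is e*-regular. -/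
open Set Topology

variable {X : Type*} [TopologicalSpace X]

lemma deltaCl_closure_subset (A : Set X) : deltaCl (closure A) ⊆ deltaCl A := by
  intro x hx U hU hxU
  obtain ⟨y, hy1, hy2⟩ := hx U hU hxU
  rcases mem_closure_iff.mp hy2 _ isOpen_interior hy1 with ⟨z, hz1, hz2⟩
  exact ⟨z, hz1, hz2⟩

lemma isOpen_eStarOpen {U : Set X} (h : IsOpen U) : EStarOpen U := by
  intro x hx
  have h1 : U ⊆ interior (deltaCl U) :=
    interior_maximal (subset_deltaCl U) h
  exact subset_closure (h1 hx)

lemma eStarOpen_union {U V : Set X} (hU : EStarOpen U) (hV : EStarOpen V) :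
    EStarOpen (U ∪ V) := by
  intro x hx
  rcases hx with hx | hx
  · exact closure_mono (interior_mono (deltaCl_mono subset_union_left)) (hU hx)
  · exact closure_mono (interior_mono (deltaCl_mono subset_union_right)) (hV hx)

lemma key_claim (A : Set X) :
    interior (deltaCl A) ⊆ deltaCl (A ∩ closure (interior (deltaCl A))) := by
  intro y hy U hU hyU
  set V := U ∩ interior (deltaCl A) with hVdef
  have hVopen : IsOpen V := hU.inter isOpen_interior
  have hyV : y ∈ V := ⟨hyU, hy⟩
  have hyd : y ∈ deltaCl A := interior_subset hy
  obtain ⟨a, ha1, ha2⟩ := hyd V hVopen hyV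
  refine ⟨a, ?_, ha2, ?_⟩
  · exact interior_mono (closure_mono inter_subset_left) ha1
  · have : a ∈ interior (closure (interior (deltaCl A))) :=
      interior_mono (closure_mono inter_subset_right) ha1
    exact interior_subset this

lemma eStarOpen_inter_cl (A : Set X) :
    EStarOpen (A ∩ closure (interior (deltaCl A))) := by
  intro x hx
  have h1 : interior (deltaCl A) ⊆ interior (deltaCl (A ∩ closure (interior (deltaCl A)))) :=
    interior_maximal (key_claim A) isOpen_interior
  exact closure_mono h1 hx.2

lemma eStarInt_eq (A : Set X) :
    eStarInt A = A ∩ closure (interior (deltaCl A)) := by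
  apply subset_antisymm
  · intro x hx
    obtain ⟨U, ⟨hUo, hUA⟩, hxU⟩ := hx
    refine ⟨hUA hxU, ?_⟩
    exact closure_mono (interior_mono (deltaCl_mono hUA)) (hUo hxU)
  · intro x hx
    exact ⟨_, ⟨eStarOpen_inter_cl A, inter_subset_left⟩, hx⟩

theorem stmt1 (A : Set X) : EStarClosed A ↔ EStarRegular (eStarInt A) := by
  rw [eStarInt_eq]
  set R := closure (interior (deltaCl A)) with hR
  constructor
  · intro hA
    refine ⟨eStarOpen_inter_cl A, ?_⟩
    unfold EStarClosed
    rw [compl_inter]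
    exact eStarOpen_union hA (isOpen_eStarOpen isClosed_closure.isOpen_compl)
  · intro ⟨_, hcl⟩
    unfold EStarClosed at hcl ⊢
    rw [compl_inter] at hcl
    have hRc : Rᶜ ⊆ closure Aᶜ := by
      have h1 : Rᶜ ⊆ (interior (deltaCl A))ᶜ := compl_subset_compl.mpr subset_closure
      have h2 : (interior (deltaCl A))ᶜ = closure ((deltaCl A)ᶜ) := by
        rw [closure_compl]
      have h3 : (deltaCl A)ᶜ ⊆ Aᶜ := compl_subset_compl.mpr (subset_deltaCl A)
      exact h1.trans (h2 ▸ closure_mono h3)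
    have hsub : Aᶜ ∪ Rᶜ ⊆ closure Aᶜ := union_subset subset_closure hRc
    have hd : deltaCl (Aᶜ ∪ Rᶜ) ⊆ deltaCl Aᶜ :=
      (deltaCl_mono hsub).trans (deltaCl_closure_subset Aᶜ)
    intro x hx
    exact closure_mono (interior_mono hd) (hcl (Or.inl hx))
end

section
/- If A is an e*-open subset of a topological space X, then e*-cl(A) = e*-cl_θ(A), where e*-cl_θ(A) is the set of points x such that e*-cl(U) ∩ A ≠ ∅ for every e*-open set U containing x. -/
open Set Topology

variable {X : Type*} [TopologicalSpace X]

theorem stmt2 (A : Set X) (h : EStarOpen A) : eStarCl A = eStarClTheta A := by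
  ext x
  constructor
  · intro hx U hU hxU
    by_contra hne
    rw [Set.not_nonempty_iff_eq_empty] at hne
    have hUA : U ∩ A = ∅ := by
      apply Set.eq_empty_of_subset_empty
      rw [← hne]
      exact Set.inter_subset_inter_left _
        (fun y hy => Set.mem_sInter.2 fun F hF => hF.2 hy)
    have hsub : A ⊆ Uᶜ := fun y hy hyU =>
      (Set.eq_empty_iff_forall_notMem.1 hUA y) ⟨hyU, hy⟩
    have hxc : x ∈ Uᶜ :=
      (Set.mem_sInter.1 hx) Uᶜ ⟨by simpa [EStarClosed, compl_compl] using hU, hsub⟩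
    exact hxc hxU
  · intro hx
    rw [eStarCl, Set.mem_sInter]
    intro F hF
    by_contra hxF
    obtain ⟨y, hy1, hy2⟩ := hx Fᶜ hF.1 hxF
    have : y ∈ Aᶜ :=
      (Set.mem_sInter.1 hy1) Aᶜ
        ⟨by simpa [EStarClosed, compl_compl] using h, fun z hz hzA => hz (hF.2 hzA)⟩
    exact this hy2
end

section
/- A subset A of a topological space X is e*-regular if and only if A is both e*-θ-open and e*-θ-closed. -/
open Set Topology

variable {X : Type*} [TopologicalSpace X]

lemma eStarOpen_sUnion {S : Set (Set X)} (h : ∀ s ∈ S, EStarOpen s) :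
    EStarOpen (⋃₀ S) := by
  intro x hx
  obtain ⟨s, hs, hxs⟩ := hx
  exact closure_mono (interior_mono (deltaCl_mono (subset_sUnion_of_mem hs))) (h s hs hxs)

lemma thetaClosed_of_regular {A : Set X} (h : EStarRegular A) : EStarThetaClosed A := by
  apply Set.Subset.antisymm
  · intro x hx U hU hxU
    exact ⟨x, subset_eStarCl U hxU, hx⟩
  · intro x hx
    by_contra hxA
    obtain ⟨y, hy1, hy2⟩ := hx Aᶜ h.2 hxA
    have : eStarCl Aᶜ ⊆ Aᶜ := sInter_subset_of_mem ⟨by simpa [EStarClosed] using h.1, subset_rfl⟩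
    exact this hy1 hy2

lemma eStarClosed_of_thetaClosed {A : Set X} (h : EStarThetaClosed A) : EStarClosed A := by
  have hcl : eStarCl A = A := by
    apply Set.Subset.antisymm _ (subset_eStarCl A)
    intro x hx
    by_contra hxA
    have hx' : x ∉ eStarClTheta A := by rw [← h]; exact hxA
    simp only [eStarClTheta, mem_setOf_eq, not_forall] at hx'
    obtain ⟨U, hU, hxU, hempty⟩ := hx'
    have hAU : A ⊆ Uᶜ := fun y hy hyU =>
      hempty ⟨y, subset_eStarCl U hyU, hy⟩
    have : eStarCl A ⊆ Uᶜ :=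
      sInter_subset_of_mem ⟨by simpa [EStarClosed, compl_compl] using hU, hAU⟩
    exact this hx hxU
  rw [← hcl]; exact eStarClosed_eStarCl A

theorem stmt3 (A : Set X) : EStarRegular A ↔ EStarThetaOpen A ∧ EStarThetaClosed A := by
  constructor
  · intro h
    refine ⟨thetaClosed_of_regular ⟨?_, ?_⟩, thetaClosed_of_regular h⟩
    · exact h.2
    · simpa [EStarClosed, compl_compl] using h.1
  · rintro ⟨ho, hc⟩
    refine ⟨?_, eStarClosed_of_thetaClosed hc⟩
    have := eStarClosed_of_thetaClosed ho
    simpa [EStarClosed, compl_compl] using this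
end
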